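/- Let p be an odd prime and b an integer whose reduction mod p is a quadratic non-residue in F_p^×. Then the quaternion algebra H_{p,b} over ℚ_p is a division algebra (non-split), i.e., the quadratic form w² − p x² − b y² + p b z² is anisotropic over ℚ_p. -/

import Mathlib

section aux

variable {p : ℕ} [Fact p.Prime]

private lemma one_lt_p_real : (1 : ℝ) < (p : ℝ) := by
  exact_mod_cast (Fact.out : p.Prime).one_lt

private lemma val_eq_of_norm_eq {x y : ℚ_[p]} (hx : x ≠ 0) (hy : y ≠ 0)
    (h : ‖x‖ = ‖y‖) : x.valuation = y.valuation := by
  rw [Padic.norm_eq_zpow_neg_valuation hx, Padic.norm_eq_zpow_neg_valuation hy] at h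
  have := (zpow_right_strictMono₀ (one_lt_p_real (p := p))).injective h
  omega

private lemma val_neg {x : ℚ_[p]} (hx : x ≠ 0) : (-x).valuation = x.valuation :=
  val_eq_of_norm_eq (neg_ne_zero.mpr hx) hx (norm_neg x)

private lemma key {b : ℤ}
    (hb0 : (b : ZMod p) ≠ 0) (hb : ¬ IsSquare (b : ZMod p))
    {u v : ℚ_[p]} (huv : u ≠ 0 ∨ v ≠ 0) :
    u ^ 2 - (b : ℚ_[p]) * v ^ 2 ≠ 0 ∧
      Even ((u ^ 2 - (b : ℚ_[p]) * v ^ 2).valuation) := by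
  have hpbz : ¬ (p : ℤ) ∣ b := fun hd => hb0 ((ZMod.intCast_zmod_eq_zero_iff_dvd b p).mpr hd)
  have hbz : b ≠ 0 := by rintro rfl; simp at hb0
  have hbQ : (b : ℚ_[p]) ≠ 0 := Int.cast_ne_zero.mpr hbz
  have hbval : (b : ℚ_[p]).valuation = 0 := by
    rw [Padic.valuation_intCast, padicValInt.eq_zero_of_not_dvd hpbz]
    rfl
  by_cases hv : v = 0
  · have hu : u ≠ 0 := by tauto
    have hL : u ^ 2 - (b : ℚ_[p]) * v ^ 2 = u * u := by rw [hv]; ring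
    rw [hL]
    refine ⟨mul_ne_zero hu hu, ?_⟩
    rw [Padic.valuation_mul hu hu]
    exact ⟨u.valuation, rfl⟩
  by_cases hu : u = 0
  · have hL : u ^ 2 - (b : ℚ_[p]) * v ^ 2 = -((b : ℚ_[p]) * (v * v)) := by rw [hu]; ring
    have hvv : v * v ≠ 0 := mul_ne_zero hv hv
    have hBne : (b : ℚ_[p]) * (v * v) ≠ 0 := mul_ne_zero hbQ hvv
    rw [hL]
    refine ⟨neg_ne_zero.mpr hBne, ?_⟩
    rw [val_neg hBne, Padic.valuation_mul hbQ hvv, hbval,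
      Padic.valuation_mul hv hv]
    exact ⟨v.valuation, by ring⟩
  -- both nonzero
  have hA : u ^ 2 ≠ 0 := pow_ne_zero 2 hu
  have hB : (b : ℚ_[p]) * v ^ 2 ≠ 0 := mul_ne_zero hbQ (pow_ne_zero 2 hv)
  have hvA : (u ^ 2).valuation = u.valuation + u.valuation := by
    rw [pow_two, Padic.valuation_mul hu hu]
  have hvB : ((b : ℚ_[p]) * v ^ 2).valuation = v.valuation + v.valuation := by
    rw [Padic.valuation_mul hbQ (pow_ne_zero 2 hv), hbval, pow_two,
      Padic.valuation_mul hv hv, zero_add]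
  by_cases heq : u.valuation = v.valuation
  · -- equal valuations: the ratio is a unit whose square is not b mod p
    have hnu : ‖u‖ = ‖v‖ := by
      rw [Padic.norm_eq_zpow_neg_valuation hu, Padic.norm_eq_zpow_neg_valuation hv, heq]
    have hc1 : ‖u / v‖ = 1 := by
      rw [norm_div, hnu, div_self (norm_ne_zero_iff.mpr hv)]
    set c : ℚ_[p] := u / v with hc_def
    set cI : ℤ_[p] := ⟨c, le_of_eq hc1⟩ with hcI_def
    set D : ℤ_[p] := cI ^ 2 - (b : ℤ_[p]) with hD_def
    have hDred : PadicInt.toZMod D ≠ 0 := by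
      intro h0
      rw [hD_def, map_sub, map_pow, map_intCast] at h0
      exact hb ⟨PadicInt.toZMod cI, by rw [← pow_two]; exact (sub_eq_zero.mp h0).symm⟩
    have hDdvd : ¬ ((p : ℤ_[p]) ∣ D) := by
      intro hd
      apply hDred
      have : D ∈ RingHom.ker (PadicInt.toZMod (p := p)) := by
        rw [PadicInt.ker_toZMod, PadicInt.maximalIdeal_eq_span_p, Ideal.mem_span_singleton]
        exact hd
      exact this
    have hDnorm : ‖D‖ = 1 :=
      le_antisymm (PadicInt.norm_le_one D)
        (not_lt.mp fun hlt => hDdvd ((PadicInt.norm_lt_one_iff_dvd D).mp hlt))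
    have hDQ : ((D : ℚ_[p])) = c ^ 2 - (b : ℚ_[p]) := by
      rw [hD_def, PadicInt.coe_sub, PadicInt.coe_pow, PadicInt.coe_intCast]
    have hDQnorm : ‖c ^ 2 - (b : ℚ_[p])‖ = 1 := by
      rw [← hDQ, ← PadicInt.norm_def, hDnorm]
    have hDne : c ^ 2 - (b : ℚ_[p]) ≠ 0 := by
      intro h0; rw [h0, norm_zero] at hDQnorm; norm_num at hDQnorm
    have hDval : (c ^ 2 - (b : ℚ_[p])).valuation = 0 := by
      have := val_eq_of_norm_eq hDne one_ne_zero (by rw [hDQnorm, norm_one])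
      rw [this, Padic.valuation_one]
    have hfact : u ^ 2 - (b : ℚ_[p]) * v ^ 2 = v ^ 2 * (c ^ 2 - (b : ℚ_[p])) := by
      rw [hc_def]; field_simp
    constructor
    · rw [hfact]; exact mul_ne_zero (pow_ne_zero 2 hv) hDne
    · rw [hfact, Padic.valuation_mul (pow_ne_zero 2 hv) hDne, hDval, pow_two,
        Padic.valuation_mul hv hv]
      exact ⟨v.valuation, by ring⟩
  · -- distinct valuations: ultrametric gives the min, which is even
    have hnAB : ‖u ^ 2‖ ≠ ‖(b : ℚ_[p]) * v ^ 2‖ := by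
      intro hn
      have := val_eq_of_norm_eq hA hB hn
      rw [hvA, hvB] at this
      omega
    have hL : u ^ 2 - (b : ℚ_[p]) * v ^ 2 = u ^ 2 + -((b : ℚ_[p]) * v ^ 2) := by ring
    have hmax : ‖u ^ 2 - (b : ℚ_[p]) * v ^ 2‖ = max ‖u ^ 2‖ ‖(b : ℚ_[p]) * v ^ 2‖ := by
      rw [hL, Padic.add_eq_max_of_ne (by rw [norm_neg]; exact hnAB), norm_neg]
    have hLne : u ^ 2 - (b : ℚ_[p]) * v ^ 2 ≠ 0 := by
      intro h0
      rw [h0, norm_zero] at hmax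
      have : (0 : ℝ) < max ‖u ^ 2‖ ‖(b : ℚ_[p]) * v ^ 2‖ :=
        lt_max_iff.mpr (Or.inl (norm_pos_iff.mpr hA))
      linarith
    refine ⟨hLne, ?_⟩
    rcases max_cases ‖u ^ 2‖ ‖(b : ℚ_[p]) * v ^ 2‖ with ⟨hm, _⟩ | ⟨hm, _⟩
    · have := val_eq_of_norm_eq hLne hA (by rw [hmax, hm])
      rw [this, hvA]; exact ⟨u.valuation, rfl⟩
    · have := val_eq_of_norm_eq hLne hB (by rw [hmax, hm])
      rw [this, hvB]; exact ⟨v.valuation, rfl⟩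

end aux

theorem quaternion_ramified_at_p (p : ℕ) [Fact p.Prime] (hodd : p ≠ 2) (b : ℤ)
    (hb0 : (b : ZMod p) ≠ 0) (hb : ¬ IsSquare (b : ZMod p))
    (w x y z : ℚ_[p])
    (h : w ^ 2 - (p : ℚ_[p]) * x ^ 2 - (b : ℚ_[p]) * y ^ 2
        + (p : ℚ_[p]) * (b : ℚ_[p]) * z ^ 2 = 0) :
    w = 0 ∧ x = 0 ∧ y = 0 ∧ z = 0 := by
  have hpQ : (p : ℚ_[p]) ≠ 0 := Nat.cast_ne_zero.mpr (Fact.out : p.Prime).ne_zero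
  have h1 : w ^ 2 - (b : ℚ_[p]) * y ^ 2
      = (p : ℚ_[p]) * (x ^ 2 - (b : ℚ_[p]) * z ^ 2) := by linear_combination h
  by_cases hwy : w = 0 ∧ y = 0
  · obtain ⟨hw, hy⟩ := hwy
    have hR0 : x ^ 2 - (b : ℚ_[p]) * z ^ 2 = 0 := by
      have h2 := h1
      rw [hw, hy] at h2
      have : (p : ℚ_[p]) * (x ^ 2 - (b : ℚ_[p]) * z ^ 2) = 0 := by linear_combination -h2
      exact (mul_eq_zero.mp this).resolve_left hpQ
    by_cases hxz : x = 0 ∧ z = 0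
    · exact ⟨hw, hxz.1, hy, hxz.2⟩
    · exact absurd hR0 (key hb0 hb (by tauto)).1
  · exfalso
    have huv : w ≠ 0 ∨ y ≠ 0 := by tauto
    obtain ⟨hLne, hLev⟩ := key hb0 hb huv
    have hRne : x ^ 2 - (b : ℚ_[p]) * z ^ 2 ≠ 0 := by
      intro h0; rw [h0, mul_zero] at h1; exact hLne h1
    have hxz : x ≠ 0 ∨ z ≠ 0 := by
      by_contra hc
      push_neg at hc
      apply hRne
      rw [hc.1, hc.2]; ring
    obtain ⟨_, hRev⟩ := key hb0 hb hxz
    have hval : (w ^ 2 - (b : ℚ_[p]) * y ^ 2).valuation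
        = 1 + (x ^ 2 - (b : ℚ_[p]) * z ^ 2).valuation := by
      rw [h1, Padic.valuation_mul hpQ hRne, Padic.valuation_p]
    rw [hval] at hLev
    obtain ⟨k, hk⟩ := hLev
    obtain ⟨m, hm⟩ := hRev
    omega
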